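/- arXiv:2402.13087 — 2 statements merged into one kernel-verified Lean document; each statement's English description precedes it below -/
import Mathlib

section
/- Let μ > 0 and let P and P' be probability measures on a measurable space. Then the following are equivalent: (i) both (P, P') and (P', P) satisfy the trade-off bound G_μ; (ii) for every ε ≥ 0, P and P' are (ε, δ(ε))-indistinguishable in both orders, where δ(ε) = Φ(−ε/μ + μ/2) − e^ε·Φ(−ε/μ − μ/2). -/
open MeasureTheory

/-- The pair `(P, P')` satisfies the trade-off bound `f` if every randomized test (a
measurable `φ` with values in `[0,1]`) has type II error `∫ (1−φ) dP'` at least `f`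
evaluated at its type I error `∫ φ dP`. -/
def SatisfiesTradeoff {Ω : Type*} [MeasurableSpace Ω] (P P' : Measure Ω)
    (f : ℝ → ℝ) : Prop :=
  ∀ φ : Ω → ℝ, Measurable φ → (∀ ω, φ ω ∈ Set.Icc (0 : ℝ) 1) →
    f (∫ ω, φ ω ∂P) ≤ ∫ ω, (1 - φ ω) ∂P'

/-- Measures `μ` and `ν` are `(ε,δ)`-indistinguishable if `μ(S) ≤ e^ε·ν(S) + δ` for
every measurable set `S`. -/
def Indist {Ω : Type*} [MeasurableSpace Ω] (ε δ : ℝ) (μ ν : Measure Ω) : Prop :=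
  ∀ S : Set Ω, MeasurableSet S →
    μ S ≤ ENNReal.ofReal (Real.exp ε) * ν S + ENNReal.ofReal δ

/-- `Φ`, the CDF of the standard Gaussian measure `N(0,1)` on `ℝ`. -/
noncomputable def stdGaussianCDF (x : ℝ) : ℝ :=
  ((ProbabilityTheory.gaussianReal 0 1) (Set.Iic x)).toReal

/-- `Φ⁻¹`, the inverse of the standard Gaussian CDF (on `(0,1)`). -/
noncomputable def stdGaussianCDFInv : ℝ → ℝ := Function.invFun stdGaussianCDF

/-- `G_μ(x) = Φ(Φ⁻¹(1−x) − μ)` for `x ∈ (0,1)`, with `G_μ(0) = 1` and `G_μ(1) = 0`. -/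
noncomputable def Gmu (μ : ℝ) (x : ℝ) : ℝ :=
  if x ≤ 0 then 1 else if 1 ≤ x then 0
  else stdGaussianCDF (stdGaussianCDFInv (1 - x) - μ)


open ProbabilityTheory Real Filter Set Topology



noncomputable def stdg : ℝ → ℝ := gaussianPDFReal 0 1

lemma stdg_pos (x : ℝ) : 0 < stdg x := gaussianPDFReal_pos 0 1 x one_ne_zero

lemma stdg_eq (x : ℝ) : stdg x = (Real.sqrt (2 * π))⁻¹ * rexp (-x ^ 2 / 2) := by
  simp [stdg, gaussianPDFReal]

lemma stdg_cont : Continuous stdg := by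
  simp only [funext stdg_eq]
  fun_prop

lemma stdg_shift (m t : ℝ) : stdg (t - m) = stdg t * rexp (t * m - m ^ 2 / 2) := by
  rw [stdg_eq, stdg_eq, mul_assoc, ← Real.exp_add]
  ring_nf

lemma stdg_neg (t : ℝ) : stdg (-t) = stdg t := by
  rw [stdg_eq, stdg_eq]; ring_nf

lemma stdg_integrable : Integrable stdg := integrable_gaussianPDFReal 0 1

lemma stdg_integral_eq_one : ∫ x, stdg x = 1 := integral_gaussianPDFReal_eq_one 0 one_ne_zero

noncomputable abbrev Phi := stdGaussianCDF

lemma Phi_eq_integral (x : ℝ) : Phi x = ∫ t in Iic x, stdg t := by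
  rw [Phi, stdGaussianCDF, gaussianReal_apply_eq_integral 0 one_ne_zero,
    ENNReal.toReal_ofReal]
  · rfl
  · exact setIntegral_nonneg measurableSet_Iic fun t _ => (stdg_pos t).le

lemma Phi_sub_Phi (a b : ℝ) : Phi b - Phi a = ∫ t in a..b, stdg t := by
  rw [Phi_eq_integral, Phi_eq_integral]
  exact intervalIntegral.integral_Iic_sub_Iic stdg_integrable.integrableOn stdg_integrable.integrableOn

lemma Phi_hasDerivAt (x : ℝ) : HasDerivAt Phi (stdg x) x := by
  have h : ∀ y, Phi 0 + (∫ t in (0:ℝ)..y, stdg t) = Phi y := by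
    intro y
    rw [← Phi_sub_Phi 0 y]; ring
  exact (((stdg_cont.integral_hasStrictDerivAt 0 x).hasDerivAt).const_add
    (Phi 0)).congr_of_eventuallyEq (Eventually.of_forall fun y => (h y).symm)

lemma Phi_continuous : Continuous Phi :=
  continuous_iff_continuousAt.mpr fun x => (Phi_hasDerivAt x).continuousAt

lemma Phi_strictMono : StrictMono Phi :=
  strictMono_of_deriv_pos fun x => by rw [(Phi_hasDerivAt x).deriv]; exact stdg_pos x

lemma Phi_nonneg (x : ℝ) : 0 ≤ Phi x := ENNReal.toReal_nonneg

lemma Phi_le_one (x : ℝ) : Phi x ≤ 1 := by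
  have : (gaussianReal 0 1) (Iic x) ≤ 1 := prob_le_one
  simpa [Phi, stdGaussianCDF] using ENNReal.toReal_mono ENNReal.one_ne_top this

lemma Phi_pos (x : ℝ) : 0 < Phi x := lt_of_le_of_lt (Phi_nonneg (x - 1))
  (Phi_strictMono (by linarith))

lemma Phi_lt_one (x : ℝ) : Phi x < 1 := lt_of_lt_of_le
  (Phi_strictMono (show x < x + 1 by linarith)) (Phi_le_one (x + 1))

lemma Phi_neg (x : ℝ) : Phi (-x) = 1 - Phi x := by
  have h1 : Phi (-x) = ∫ t in Ioi x, stdg t := by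
    rw [Phi_eq_integral, ← integral_comp_neg_Ioi]
    simp only [stdg_neg]
  have h2 : Phi x + ∫ t in Ioi x, stdg t = 1 := by
    rw [Phi_eq_integral, ← stdg_integral_eq_one]
    rw [← intervalIntegral.integral_Iic_add_Ioi stdg_integrable.integrableOn stdg_integrable.integrableOn]
  linarith

lemma Phi_tendsto_atTop : Tendsto Phi atTop (𝓝 1) := by
  have h := tendsto_measure_Iic_atTop (α := ℝ) (gaussianReal 0 1)
  rw [measure_univ] at h
  have := (ENNReal.tendsto_toReal ENNReal.one_ne_top).comp h
  exact this

lemma Phi_tendsto_atBot : Tendsto Phi atBot (𝓝 0) := by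
  have h : Tendsto (fun x => 1 - Phi (-x)) atBot (𝓝 (1 - 1)) :=
    tendsto_const_nhds.sub (Phi_tendsto_atTop.comp tendsto_neg_atBot_atTop)
  simp only [Phi_neg, sub_sub_cancel, sub_self] at h
  exact h

lemma Phi_surjOn : ∀ y ∈ Ioo (0:ℝ) 1, ∃ x, Phi x = y := by
  intro y hy
  obtain ⟨a, ha⟩ : ∃ a, Phi a < y := by
    have := Phi_tendsto_atBot.eventually_lt_const hy.1
    exact this.exists
  obtain ⟨b, hb⟩ : ∃ b, y < Phi b := by
    have := Phi_tendsto_atTop.eventually_const_lt hy.2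
    exact this.exists
  have := intermediate_value_univ a b Phi_continuous
  exact this ⟨ha.le, hb.le⟩

lemma PhiInv_Phi (x : ℝ) : stdGaussianCDFInv (Phi x) = x :=
  Function.leftInverse_invFun Phi_strictMono.injective x

lemma Phi_PhiInv {y : ℝ} (hy : y ∈ Ioo (0:ℝ) 1) : Phi (stdGaussianCDFInv y) = y := by
  obtain ⟨x, hx⟩ := Phi_surjOn y hy
  rw [← hx, PhiInv_Phi]

section Part2

variable {μ ε : ℝ}

/-- derivative of the auxiliary function `h t = Φ(t-μ) + e^ε Φ(-t)`. -/
lemma hfun_hasDerivAt (μ ε t : ℝ) :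
    HasDerivAt (fun t => Phi (t - μ) + rexp ε * Phi (-t))
      (stdg (t - μ) - rexp ε * stdg t) t := by
  have h1 : HasDerivAt (fun t : ℝ => Phi (t - μ)) (stdg (t - μ)) t := by
    have := (Phi_hasDerivAt (t - μ)).comp t ((hasDerivAt_id t).sub_const μ)
    simpa [Function.comp_def] using this
  have h2 : HasDerivAt (fun t : ℝ => Phi (-t)) (-stdg t) t := by
    have := (Phi_hasDerivAt (-t)).comp t (hasDerivAt_neg t)
    simpa [stdg_neg, Function.comp_def] using this
  have := h1.add ((h2.const_mul (rexp ε)))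
  refine this.congr_deriv ?_
  ring

lemma keymin (hμ : 0 < μ) (hε : 0 ≤ ε) (t : ℝ) :
    Phi (ε / μ - μ / 2) + rexp ε * Phi (-(ε / μ) - μ / 2)
      ≤ Phi (t - μ) + rexp ε * Phi (-t) := by
  set c : ℝ := ε / μ + μ / 2 with hc
  set h : ℝ → ℝ := fun t => Phi (t - μ) + rexp ε * Phi (-t) with hh
  have hderiv : ∀ s, deriv h s = stdg (s - μ) - rexp ε * stdg s :=
    fun s => (hfun_hasDerivAt μ ε s).deriv
  have hdiff : Differentiable ℝ h := fun s => (hfun_hasDerivAt μ ε s).differentiableAt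
  have hcont : Continuous h := hdiff.continuous
  have hcm : c * μ = ε + μ ^ 2 / 2 := by
    rw [hc]; field_simp
  have hsign : ∀ s : ℝ, deriv h s = stdg s * (rexp (s * μ - μ ^ 2 / 2) - rexp ε) := by
    intro s
    rw [hderiv, stdg_shift]
    ring
  have hkey : h c ≤ h t := by
    rcases le_total c t with hct | htc
    · have mono : MonotoneOn h (Ici c) := by
        apply monotoneOn_of_deriv_nonneg (convex_Ici c) hcont.continuousOn
          (hdiff.differentiableOn)
        intro s hs
        rw [interior_Ici] at hs
        rw [hsign]
        have h1 : rexp ε ≤ rexp (s * μ - μ ^ 2 / 2) := by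
          apply Real.exp_le_exp.mpr
          have h2 : c * μ ≤ s * μ :=
            mul_le_mul_of_nonneg_right (mem_Ioi.mp hs).le hμ.le
          rw [hcm] at h2
          linarith
        nlinarith [(stdg_pos s).le]
      exact mono (self_mem_Ici) hct hct
    · have anti : AntitoneOn h (Iic c) := by
        apply antitoneOn_of_deriv_nonpos (convex_Iic c) hcont.continuousOn
          (hdiff.differentiableOn)
        intro s hs
        rw [interior_Iic] at hs
        rw [hsign]
        have h1 : rexp (s * μ - μ ^ 2 / 2) ≤ rexp ε := by
          apply Real.exp_le_exp.mpr
          have h2 : s * μ ≤ c * μ :=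
            mul_le_mul_of_nonneg_right (mem_Iio.mp hs).le hμ.le
          rw [hcm] at h2
          linarith
        nlinarith [(stdg_pos s).le]
      exact anti htc (self_mem_Iic) htc
  have hce : c - μ = ε / μ - μ / 2 := by rw [hc]; ring
  have hce2 : -c = -(ε / μ) - μ / 2 := by rw [hc]; ring
  calc Phi (ε / μ - μ / 2) + rexp ε * Phi (-(ε / μ) - μ / 2)
      = h c := by rw [hh]; simp only [hce, hce2]
    _ ≤ h t := hkey

/-- `1 - δ(ε)` as the minimum value. -/
lemma one_sub_delta (μ ε : ℝ) :
    1 - (Phi (-(ε / μ) + μ / 2) - rexp ε * Phi (-(ε / μ) - μ / 2))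
      = Phi (ε / μ - μ / 2) + rexp ε * Phi (-(ε / μ) - μ / 2) := by
  have : Phi (-(ε / μ) + μ / 2) = 1 - Phi (ε / μ - μ / 2) := by
    rw [show -(ε / μ) + μ / 2 = -(ε / μ - μ / 2) by ring, Phi_neg]
  rw [this]; ring

lemma delta_nonneg (hμ : 0 < μ) (hε : 0 ≤ ε) :
    0 ≤ Phi (-(ε / μ) + μ / 2) - rexp ε * Phi (-(ε / μ) - μ / 2) := by
  have hlim : Tendsto (fun t => Phi (t - μ) + rexp ε * Phi (-t)) atTop
      (𝓝 (1 + rexp ε * 0)) := by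
    refine Tendsto.add ?_ (Tendsto.const_mul _ ?_)
    · exact Phi_tendsto_atTop.comp (tendsto_atTop_add_const_right atTop (-μ)
        tendsto_id)
    · exact Phi_tendsto_atBot.comp tendsto_neg_atTop_atBot
  have hge := ge_of_tendsto hlim (Eventually.of_forall fun t => keymin hμ hε t)
  have := one_sub_delta μ ε
  linarith [hge]

lemma delta_le (μ ε : ℝ) :
    Phi (-(ε / μ) + μ / 2) - rexp ε * Phi (-(ε / μ) - μ / 2)
      ≤ Phi (-(ε / μ) + μ / 2) := by
  nlinarith [Phi_nonneg (-(ε / μ) - μ / 2), Real.exp_pos ε]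

lemma delta_tendsto (hμ : 0 < μ) :
    Tendsto (fun ε => Phi (-(ε / μ) + μ / 2) - rexp ε * Phi (-(ε / μ) - μ / 2))
      atTop (𝓝 0) := by
  have hg : Tendsto (fun ε => Phi (-(ε / μ) + μ / 2)) atTop (𝓝 0) := by
    apply Phi_tendsto_atBot.comp
    apply tendsto_atBot_add_const_right atTop (μ / 2)
    exact tendsto_neg_atTop_atBot.comp (tendsto_id.atTop_div_const hμ)
  refine squeeze_zero' ?_ ?_ hg
  · filter_upwards [eventually_ge_atTop (0:ℝ)] with ε hε using delta_nonneg hμ hε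
  · exact Eventually.of_forall fun ε => delta_le μ ε

end Part2

section Part3

variable {Ω : Type*} [MeasurableSpace Ω]

lemma toReal_le_one {Q : Measure Ω} [IsProbabilityMeasure Q] (S : Set Ω) :
    (Q S).toReal ≤ 1 :=
  ENNReal.toReal_mono ENNReal.one_ne_top prob_le_one

/-- from `Indist` on sets to a bound for `[0,1]`-valued tests, via layer cake. -/
lemma test_bound {Q Q' : Measure Ω} [IsProbabilityMeasure Q] [IsProbabilityMeasure Q']
    {ε δ : ℝ} (hδ : 0 ≤ δ) (h : Indist ε δ Q Q') {φ : Ω → ℝ} (hφ : Measurable φ)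
    (hφ01 : ∀ ω, φ ω ∈ Icc (0:ℝ) 1) :
    ∫ ω, φ ω ∂Q ≤ rexp ε * ∫ ω, φ ω ∂Q' + δ := by
  have hint : ∀ (R : Measure Ω) [IsProbabilityMeasure R], Integrable φ R := by
    intro R _
    refine (integrable_const (1:ℝ)).mono' hφ.aestronglyMeasurable ?_
    refine Eventually.of_forall fun ω => ?_
    rw [Real.norm_eq_abs, abs_of_nonneg (hφ01 ω).1]
    exact (hφ01 ω).2
  have hlayer : ∀ (R : Measure Ω) [IsProbabilityMeasure R],
      ∫ ω, φ ω ∂ R = ∫ t in Ioc (0:ℝ) 1, (R {a | t ≤ φ a}).toReal := by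
    intro R _
    exact (hint R).integral_eq_integral_Ioc_meas_le
      (Eventually.of_forall fun ω => (hφ01 ω).1)
      (Eventually.of_forall fun ω => (hφ01 ω).2)
  have hSmeas : ∀ t : ℝ, MeasurableSet {a | t ≤ φ a} := by
    intro t
    exact hφ measurableSet_Ici
  -- pointwise bound
  have hpt : ∀ t : ℝ, (Q {a | t ≤ φ a}).toReal
      ≤ rexp ε * (Q' {a | t ≤ φ a}).toReal + δ := by
    intro t
    have h1 := h _ (hSmeas t)
    have h2 : (ENNReal.ofReal (rexp ε) * Q' {a | t ≤ φ a}
        + ENNReal.ofReal δ).toReal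
        = rexp ε * (Q' {a | t ≤ φ a}).toReal + δ := by
      rw [ENNReal.toReal_add (by finiteness) (by finiteness), ENNReal.toReal_mul,
        ENNReal.toReal_ofReal (Real.exp_nonneg ε), ENNReal.toReal_ofReal hδ]
    rw [← h2]
    exact ENNReal.toReal_mono (by finiteness) h1
  -- integrability of the two layer-cake integrands
  have hmeasQ : ∀ (R : Measure Ω), Measurable (fun t : ℝ => (R {a | t ≤ φ a}).toReal) := by
    intro R
    apply Measurable.ennreal_toReal
    apply Antitone.measurable
    intro s t hst
    exact measure_mono fun a ha => le_trans hst ha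
  have hintQ : ∀ (R : Measure Ω) [IsProbabilityMeasure R],
      IntegrableOn (fun t : ℝ => (R {a | t ≤ φ a}).toReal) (Ioc (0:ℝ) 1) := by
    intro R _
    have hone : IntegrableOn (fun _ : ℝ => (1:ℝ)) (Ioc (0:ℝ) 1) :=
      integrableOn_const measure_Ioc_lt_top.ne
    refine hone.mono' (hmeasQ R).aestronglyMeasurable ?_
    refine Eventually.of_forall fun t => ?_
    rw [Real.norm_eq_abs, abs_of_nonneg ENNReal.toReal_nonneg]
    exact toReal_le_one _
  calc ∫ ω, φ ω ∂Q = ∫ t in Ioc (0:ℝ) 1, (Q {a | t ≤ φ a}).toReal := hlayer Q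
    _ ≤ ∫ t in Ioc (0:ℝ) 1, (rexp ε * (Q' {a | t ≤ φ a}).toReal + δ) := by
        have hδint : IntegrableOn (fun _ : ℝ => δ) (Ioc (0:ℝ) 1) :=
          integrableOn_const measure_Ioc_lt_top.ne
        refine setIntegral_mono_on (hintQ Q) ?_ measurableSet_Ioc fun t _ => hpt t
        exact ((hintQ Q').const_mul (rexp ε)).add hδint
    _ = rexp ε * (∫ t in Ioc (0:ℝ) 1, (Q' {a | t ≤ φ a}).toReal) + δ := by
        have hδint : IntegrableOn (fun _ : ℝ => δ) (Ioc (0:ℝ) 1) :=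
          integrableOn_const measure_Ioc_lt_top.ne
        rw [integral_add ((hintQ Q').const_mul (rexp ε)) hδint,
          integral_const_mul, setIntegral_const]
        simp [Real.volume_Ioc]
    _ = rexp ε * ∫ ω, φ ω ∂Q' + δ := by rw [← hlayer Q']

/-- needed integrals of indicator tests. -/
lemma indicator_mem_Icc (S : Set Ω) (ω : Ω) :
    S.indicator (1 : Ω → ℝ) ω ∈ Icc (0:ℝ) 1 := by
  by_cases h : ω ∈ S <;> simp [Set.indicator_apply, h]

lemma integral_one_sub_indicator (R : Measure Ω) [IsProbabilityMeasure R]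
    {S : Set Ω} (hS : MeasurableSet S) :
    ∫ ω, (1 - S.indicator (1 : Ω → ℝ) ω) ∂ R = 1 - (R S).toReal := by
  have hind : Integrable (S.indicator (1 : Ω → ℝ)) R := (integrable_const (1:ℝ)).indicator hS
  rw [integral_sub (integrable_const 1) hind]
  simp only [integral_const, measure_univ, probReal_univ, ENNReal.toReal_one, one_smul]
  congr 1
  exact integral_indicator_one hS

/-- Forward direction: tradeoff bound implies indistinguishability. -/
lemma indist_of_tradeoff {μ : ℝ} (hμ : 0 < μ) {P P' : Measure Ω}
    [IsProbabilityMeasure P] [IsProbabilityMeasure P']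
    (ht : SatisfiesTradeoff P' P (Gmu μ)) {ε : ℝ} (hε : 0 ≤ ε) :
    Indist ε (Phi (-(ε / μ) + μ / 2) - rexp ε * Phi (-(ε / μ) - μ / 2)) P P' := by
  intro S hS
  set δ : ℝ := Phi (-(ε / μ) + μ / 2) - rexp ε * Phi (-(ε / μ) - μ / 2) with hδdef
  have hδ : 0 ≤ δ := delta_nonneg hμ hε
  set y : ℝ := (P' S).toReal with hy
  set p : ℝ := (P S).toReal with hp
  have hy0 : 0 ≤ y := ENNReal.toReal_nonneg
  have hy1 : y ≤ 1 := toReal_le_one S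
  have hp1 : p ≤ 1 := toReal_le_one S
  have hp0 : 0 ≤ p := ENNReal.toReal_nonneg
  -- apply the tradeoff with the indicator test
  have htest := ht (S.indicator (1 : Ω → ℝ))
    (measurable_one.indicator hS) (indicator_mem_Icc S)
  rw [integral_indicator_one hS, Measure.real_def, ← hy, integral_one_sub_indicator P hS] at htest
  -- htest : Gmu μ y ≤ 1 - p
  have key : p ≤ rexp ε * y + δ := by
    rcases le_or_gt y 0 with hy' | hy'
    · have : Gmu μ y = 1 := by rw [Gmu, if_pos hy']
      rw [this] at htest
      nlinarith [Real.exp_nonneg ε]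
    · rcases le_or_gt 1 y with hy'' | hy''
      · have h1 : (1:ℝ) ≤ rexp ε := Real.one_le_exp hε
        nlinarith
      · have hGmu : Gmu μ y = Phi (stdGaussianCDFInv (1 - y) - μ) := by
          rw [Gmu, if_neg (not_le.mpr hy'), if_neg (not_le.mpr hy'')]
        set t : ℝ := stdGaussianCDFInv (1 - y) with htdef
        have hPhit : Phi t = 1 - y := Phi_PhiInv ⟨by linarith, by linarith⟩
        have hPhinegt : Phi (-t) = y := by rw [Phi_neg, hPhit]; ring
        have hkm := keymin hμ hε t
        have h1δ := one_sub_delta μ ε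
        rw [← hδdef] at h1δ
        rw [hGmu, ← hp] at htest
        -- 1 - δ ≤ Phi (t - μ) + e^ε * Phi (-t)
        rw [hPhinegt] at hkm
        have h2 : 1 - δ ≤ Phi (t - μ) + rexp ε * y := le_trans (le_of_eq h1δ) hkm
        linarith [h2, htest]
  calc P S = ENNReal.ofReal p := (ENNReal.ofReal_toReal (measure_ne_top P S)).symm
    _ ≤ ENNReal.ofReal (rexp ε * y + δ) := ENNReal.ofReal_le_ofReal key
    _ ≤ ENNReal.ofReal (rexp ε * y) + ENNReal.ofReal δ := ENNReal.ofReal_add_le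
    _ = ENNReal.ofReal (rexp ε) * P' S + ENNReal.ofReal δ := by
        rw [ENNReal.ofReal_mul (Real.exp_nonneg ε), hy,
          ENNReal.ofReal_toReal (measure_ne_top P' S)]

end Part3

section Part4

variable {Ω : Type*} [MeasurableSpace Ω]

/-- Converse direction: indistinguishability for all `ε ≥ 0` implies the tradeoff bound. -/
lemma tradeoff_of_indist {μ : ℝ} (hμ : 0 < μ) {P P' : Measure Ω}
    [IsProbabilityMeasure P] [IsProbabilityMeasure P']
    (h : ∀ ε : ℝ, 0 ≤ ε →
      Indist ε (Phi (-(ε / μ) + μ / 2) - rexp ε * Phi (-(ε / μ) - μ / 2)) P P' ∧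
      Indist ε (Phi (-(ε / μ) + μ / 2) - rexp ε * Phi (-(ε / μ) - μ / 2)) P' P) :
    SatisfiesTradeoff P P' (Gmu μ) := by
  intro φ hφ hφ01
  set α : ℝ := ∫ ω, φ ω ∂P with hα
  have hψ01 : ∀ ω, 1 - φ ω ∈ Icc (0:ℝ) 1 := fun ω =>
    ⟨by linarith [(hφ01 ω).2], by linarith [(hφ01 ω).1]⟩
  have hψ : Measurable fun ω => 1 - φ ω := measurable_const.sub hφ
  have hintP : Integrable φ P := by
    refine (integrable_const (1:ℝ)).mono' hφ.aestronglyMeasurable ?_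
    exact Eventually.of_forall fun ω => by
      rw [Real.norm_eq_abs, abs_of_nonneg (hφ01 ω).1]; exact (hφ01 ω).2
  have hintP' : Integrable φ P' := by
    refine (integrable_const (1:ℝ)).mono' hφ.aestronglyMeasurable ?_
    exact Eventually.of_forall fun ω => by
      rw [Real.norm_eq_abs, abs_of_nonneg (hφ01 ω).1]; exact (hφ01 ω).2
  set β : ℝ := ∫ ω, (1 - φ ω) ∂P' with hβ
  have hβ' : (∫ ω, φ ω ∂P') = 1 - β := by
    rw [hβ, integral_sub (integrable_const 1) hintP']
    simp
  have hψP : (∫ ω, (1 - φ ω) ∂P) = 1 - α := by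
    rw [integral_sub (integrable_const 1) hintP, hα]
    simp
  have hα0 : 0 ≤ α := integral_nonneg fun ω => (hφ01 ω).1
  have hα1 : α ≤ 1 := by
    rw [hα]
    calc ∫ ω, φ ω ∂P ≤ ∫ _, (1:ℝ) ∂P := integral_mono hintP (integrable_const 1)
          fun ω => (hφ01 ω).2
      _ = 1 := by simp
  have hβ0 : 0 ≤ β := integral_nonneg fun ω => (hψ01 ω).1
  -- the two families of linear bounds
  have fam1 : ∀ ε : ℝ, 0 ≤ ε → 1 - β ≤ rexp ε * α +
      (Phi (-(ε / μ) + μ / 2) - rexp ε * Phi (-(ε / μ) - μ / 2)) := by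
    intro ε hε
    have := test_bound (delta_nonneg hμ hε) (h ε hε).2 hφ hφ01
    rw [hβ'] at this
    rw [← hα] at this
    exact this
  have fam2 : ∀ ε : ℝ, 0 ≤ ε → 1 - α ≤ rexp ε * β +
      (Phi (-(ε / μ) + μ / 2) - rexp ε * Phi (-(ε / μ) - μ / 2)) := by
    intro ε hε
    have := test_bound (delta_nonneg hμ hε) (h ε hε).1 hψ hψ01
    rw [hψP, ← hβ] at this
    exact this
  rw [Gmu]
  rcases le_or_gt α 0 with hα' | hα'
  · rw [if_pos hα']
    have hα'' : α = 0 := le_antisymm hα' hα0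
    -- β ≥ 1 - δ(ε) for all ε ≥ 0, and δ(ε) → 0
    have hlim : Tendsto (fun ε : ℝ => 1 -
        (Phi (-(ε / μ) + μ / 2) - rexp ε * Phi (-(ε / μ) - μ / 2))) atTop (𝓝 (1 - 0)) :=
      tendsto_const_nhds.sub (delta_tendsto hμ)
    rw [show (1:ℝ) - 0 = 1 by ring] at hlim
    refine le_of_tendsto hlim ?_
    filter_upwards [eventually_ge_atTop (0:ℝ)] with ε hε
    have := fam1 ε hε
    rw [hα''] at this
    linarith
  · rw [if_neg (not_le.mpr hα')]
    rcases le_or_gt 1 α with hα'' | hα''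
    · rw [if_pos hα'']
      exact hβ0
    · rw [if_neg (not_le.mpr hα'')]
      set t : ℝ := stdGaussianCDFInv (1 - α) with htdef
      have hPhit : Phi t = 1 - α := Phi_PhiInv ⟨by linarith, by linarith⟩
      have hPhinegt : Phi (-t) = α := by rw [Phi_neg, hPhit]; ring
      rcases le_or_gt (μ / 2) t with hcase | hcase
      · -- use fam1 with ε = t μ - μ²/2
        set ε : ℝ := t * μ - μ ^ 2 / 2 with hεdef
        have hε : 0 ≤ ε := by rw [hεdef]; nlinarith
        have hq1 : -(ε / μ) + μ / 2 = -(t - μ) := by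
          rw [hεdef]; field_simp; ring
        have hq2 : -(ε / μ) - μ / 2 = -t := by
          rw [hεdef]; field_simp; ring
        have := fam1 ε hε
        rw [hq1, hq2, Phi_neg, hPhinegt] at this
        linarith
      · -- use fam2 with ε = μ²/2 - t μ
        set ε : ℝ := μ ^ 2 / 2 - t * μ with hεdef
        have hε : 0 ≤ ε := by rw [hεdef]; nlinarith
        have hq1 : -(ε / μ) + μ / 2 = t := by
          rw [hεdef]; field_simp; ring
        have hq2 : -(ε / μ) - μ / 2 = t - μ := by
          rw [hεdef]; field_simp; ring
        have h2 := fam2 ε hε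
        rw [hq1, hq2, hPhit] at h2
        -- 1 - α ≤ e^ε β + (1 - α) - e^ε Φ(t-μ)
        have h3 : rexp ε * Phi (t - μ) ≤ rexp ε * β := by linarith
        exact le_of_mul_le_mul_left h3 (Real.exp_pos ε)

end Part4

theorem stmt_13' {Ω : Type*} [MeasurableSpace Ω] (μ : ℝ) (hμ : 0 < μ)
    (P P' : Measure Ω) [IsProbabilityMeasure P] [IsProbabilityMeasure P'] :
    (SatisfiesTradeoff P P' (Gmu μ) ∧ SatisfiesTradeoff P' P (Gmu μ)) ↔
      ∀ ε : ℝ, 0 ≤ ε →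
        Indist ε (stdGaussianCDF (-(ε / μ) + μ / 2) -
            Real.exp ε * stdGaussianCDF (-(ε / μ) - μ / 2)) P P' ∧
        Indist ε (stdGaussianCDF (-(ε / μ) + μ / 2) -
            Real.exp ε * stdGaussianCDF (-(ε / μ) - μ / 2)) P' P := by
  constructor
  · rintro ⟨h1, h2⟩ ε hε
    exact ⟨indist_of_tradeoff hμ h2 hε, indist_of_tradeoff hμ h1 hε⟩
  · intro h
    refine ⟨tradeoff_of_indist hμ h, tradeoff_of_indist hμ fun ε hε => ⟨(h ε hε).2, (h ε hε).1⟩⟩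

/-- conversion from `μ`-GDP to `(ε,δ)`-DP: for `μ > 0` and probability
measures `P`, `P'`, the following are equivalent: (i) both `(P,P')` and `(P',P)` satisfy
the trade-off bound `G_μ`; (ii) for every `ε ≥ 0`, `P` and `P'` are
`(ε, δ(ε))`-indistinguishable in both orders with
`δ(ε) = Φ(−ε/μ + μ/2) − e^ε·Φ(−ε/μ − μ/2)`. -/
theorem stmt_13 {Ω : Type*} [MeasurableSpace Ω] (μ : ℝ) (hμ : 0 < μ)
    (P P' : Measure Ω) [IsProbabilityMeasure P] [IsProbabilityMeasure P'] :
    (SatisfiesTradeoff P P' (Gmu μ) ∧ SatisfiesTradeoff P' P (Gmu μ)) ↔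
      ∀ ε : ℝ, 0 ≤ ε →
        Indist ε (stdGaussianCDF (-(ε / μ) + μ / 2) -
            Real.exp ε * stdGaussianCDF (-(ε / μ) - μ / 2)) P P' ∧
        Indist ε (stdGaussianCDF (-(ε / μ) + μ / 2) -
            Real.exp ε * stdGaussianCDF (-(ε / μ) - μ / 2)) P' P :=
  stmt_13' μ hμ P P'
end

section
/- Let μ ≥ 0 and let N(0,1) and N(μ,1) denote the Gaussian measures on ℝ with unit variance and means 0 and μ. Then for every randomized test φ : ℝ → [0,1], ∫ (1−φ) dN(μ,1) ≥ G_μ(∫ φ dN(0,1)); moreover, for every x ∈ (0,1), the deterministic threshold test φ = indicator of [Φ^{-1}(1−x), ∞) has type I error exactly x under N(0,1) and type II error exactly G_μ(x) under N(μ,1). In other words, the pair (N(0,1), N(μ,1)) satisfies the trade-off bound G_μ, and this bound is attained by threshold tests. -/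
open MeasureTheory ProbabilityTheory

open Real Set Filter
open scoped ENNReal NNReal

/-! ### Auxiliary lemmas -/

lemma np_pdf_pos (ν x : ℝ) : 0 < gaussianPDFReal ν 1 x :=
  gaussianPDFReal_pos ν 1 x one_ne_zero

/-- Integrals against `gaussianReal ν 1` as Lebesgue integrals against the density. -/
lemma np_integral_eq (ν : ℝ) (g : ℝ → ℝ) :
    ∫ x, g x ∂(gaussianReal ν 1) = ∫ x, g x * gaussianPDFReal ν 1 x := by
  rw [gaussianReal_of_var_ne_zero _ one_ne_zero]
  have h1 : gaussianPDF ν 1 = fun x => ((gaussianPDFReal ν 1 x).toNNReal : ℝ≥0∞) := rfl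
  rw [h1, integral_withDensity_eq_integral_smul
    (f := fun x => (gaussianPDFReal ν 1 x).toNNReal)
    (measurable_real_toNNReal.comp (measurable_gaussianPDFReal ν 1)) g]
  congr 1
  funext x
  simp [NNReal.smul_def, Real.coe_toNNReal _ (gaussianPDFReal_nonneg ν 1 x), mul_comm]

lemma np_cdf_eq_integral (x : ℝ) :
    stdGaussianCDF x = ∫ t in Set.Iic x, gaussianPDFReal 0 1 t := by
  rw [stdGaussianCDF, gaussianReal_apply_eq_integral 0 one_ne_zero,
    ENNReal.toReal_ofReal (integral_nonneg fun t => gaussianPDFReal_nonneg 0 1 t)]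

lemma np_cdf_sub (a b : ℝ) :
    stdGaussianCDF b - stdGaussianCDF a = ∫ t in a..b, gaussianPDFReal 0 1 t := by
  rw [np_cdf_eq_integral, np_cdf_eq_integral]
  exact intervalIntegral.integral_Iic_sub_Iic (integrable_gaussianPDFReal 0 1).integrableOn
    (integrable_gaussianPDFReal 0 1).integrableOn

lemma np_cdf_strictMono : StrictMono stdGaussianCDF := by
  intro a b hab
  have h : 0 < ∫ t in a..b, gaussianPDFReal 0 1 t :=
    intervalIntegral.intervalIntegral_pos_of_pos (integrable_gaussianPDFReal 0 1).intervalIntegrable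
      (fun x => np_pdf_pos 0 x) hab
  have := np_cdf_sub a b
  linarith

lemma np_cdf_continuous : Continuous stdGaussianCDF := by
  have h : stdGaussianCDF = fun x => stdGaussianCDF 0 + ∫ t in (0:ℝ)..x, gaussianPDFReal 0 1 t := by
    funext x
    have := np_cdf_sub 0 x
    linarith
  rw [h]
  exact continuous_const.add ((integrable_gaussianPDFReal 0 1).continuous_primitive 0)

lemma np_cdf_tendsto_top : Tendsto stdGaussianCDF atTop (nhds 1) := by
  have h := tendsto_measure_Iic_atTop (α := ℝ) (gaussianReal 0 1)
  rw [measure_univ] at h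
  have h2 := (ENNReal.tendsto_toReal ENNReal.one_ne_top).comp h
  exact h2

lemma np_cdf_tendsto_bot :
    Tendsto (fun n : ℕ => stdGaussianCDF (-(n:ℝ))) atTop (nhds 0) := by
  have hanti : Antitone fun n : ℕ => Set.Iic (-(n:ℝ)) := by
    intro m n hmn x hx
    simp only [Set.mem_Iic] at *
    have : (m:ℝ) ≤ n := by exact_mod_cast hmn
    linarith
  have h := tendsto_measure_iInter_atTop (μ := gaussianReal 0 1)
    (fun n : ℕ => measurableSet_Iic.nullMeasurableSet) hanti ⟨0, measure_ne_top _ _⟩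
  have hempty : ⋂ n : ℕ, Set.Iic (-(n:ℝ)) = ∅ := by
    ext x
    simp only [Set.mem_iInter, Set.mem_Iic, Set.mem_empty_iff_false, iff_false, not_forall,
      not_le]
    obtain ⟨n, hn⟩ := exists_nat_gt (-x)
    exact ⟨n, by linarith⟩
  rw [hempty, measure_empty] at h
  have h2 := (ENNReal.tendsto_toReal ENNReal.zero_ne_top).comp h
  exact h2

lemma np_cdf_surj {y : ℝ} (hy : y ∈ Set.Ioo (0:ℝ) 1) : ∃ x, stdGaussianCDF x = y := by
  obtain ⟨b, hb⟩ : ∃ b, y ≤ stdGaussianCDF b :=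
    (np_cdf_tendsto_top.eventually (eventually_gt_nhds hy.2)).exists.imp
      fun b h => le_of_lt h
  obtain ⟨n, hn⟩ : ∃ n : ℕ, stdGaussianCDF (-(n:ℝ)) ≤ y :=
    (np_cdf_tendsto_bot.eventually (eventually_lt_nhds hy.1)).exists.imp
      fun n h => le_of_lt h
  have hmem : y ∈ Set.uIcc (stdGaussianCDF (-(n:ℝ))) (stdGaussianCDF b) :=
    Set.mem_uIcc.mpr (Or.inl ⟨hn, hb⟩)
  obtain ⟨x, _, hx⟩ := intermediate_value_uIcc np_cdf_continuous.continuousOn hmem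
  exact ⟨x, hx⟩

lemma np_cdf_inv {y : ℝ} (hy : y ∈ Set.Ioo (0:ℝ) 1) :
    stdGaussianCDF (stdGaussianCDFInv y) = y :=
  Function.invFun_eq (np_cdf_surj hy)

lemma np_shift (ν t : ℝ) :
    (gaussianReal ν 1) (Set.Iic t) = (gaussianReal 0 1) (Set.Iic (t - ν)) := by
  have h := gaussianReal_map_add_const (μ := 0) (v := 1) ν
  rw [zero_add] at h
  rw [← h, Measure.map_apply (measurable_add_const ν) measurableSet_Iic]
  congr 1
  ext x
  simp only [Set.mem_preimage, Set.mem_Iic]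
  constructor <;> intro hx <;> linarith

lemma np_Iic_toReal (ν t : ℝ) :
    ((gaussianReal ν 1) (Set.Iic t)).toReal = stdGaussianCDF (t - ν) := by
  rw [np_shift]; rfl

lemma np_singleton (ν t : ℝ) : (gaussianReal ν 1) {t} = 0 :=
  gaussianReal_absolutelyContinuous ν one_ne_zero (measure_singleton t)

lemma np_Iio (ν t : ℝ) : (gaussianReal ν 1) (Set.Iio t) = (gaussianReal ν 1) (Set.Iic t) := by
  rw [← Set.Iio_union_right (a := t),
    measure_union (by simp) (measurableSet_singleton t), np_singleton, add_zero]

/-- Type I error of the threshold test. -/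
lemma np_typeI {x : ℝ} (hx : x ∈ Set.Ioo (0:ℝ) 1) :
    (∫ ω, (Set.Ici (stdGaussianCDFInv (1 - x))).indicator
        (fun _ => (1 : ℝ)) ω ∂(gaussianReal 0 1)) = x := by
  set t := stdGaussianCDFInv (1 - x) with ht
  have h1x : (1 - x) ∈ Set.Ioo (0:ℝ) 1 := ⟨by linarith [hx.2], by linarith [hx.1]⟩
  rw [show (fun _ : ℝ => (1:ℝ)) = (1 : ℝ → ℝ) from rfl,
    integral_indicator_one measurableSet_Ici]
  have h1 : (gaussianReal 0 1) (Set.Ici t) = 1 - (gaussianReal 0 1) (Set.Iio t) := by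
    rw [← Set.compl_Iio]
    exact prob_compl_eq_one_sub measurableSet_Iio
  rw [measureReal_def, h1, np_Iio, ENNReal.toReal_sub_of_le prob_le_one ENNReal.one_ne_top, ENNReal.toReal_one,
    np_Iic_toReal, sub_zero, ht, np_cdf_inv h1x]
  ring

/-- Type II error of the threshold test. -/
lemma np_typeII (μ : ℝ) {x : ℝ} (hx : x ∈ Set.Ioo (0:ℝ) 1) :
    (∫ ω, (1 - (Set.Ici (stdGaussianCDFInv (1 - x))).indicator
        (fun _ => (1 : ℝ)) ω) ∂(gaussianReal μ 1)) = Gmu μ x := by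
  set t := stdGaussianCDFInv (1 - x) with ht
  have hpt : ∀ ω : ℝ, 1 - (Set.Ici t).indicator (fun _ => (1:ℝ)) ω
      = (Set.Iio t).indicator (fun _ => (1:ℝ)) ω := by
    intro ω
    rcases le_or_gt t ω with h | h
    · rw [Set.indicator_of_mem (Set.mem_Ici.mpr h),
        Set.indicator_of_notMem (by simp only [Set.mem_Iio, not_lt]; exact h)]
      ring
    · rw [Set.indicator_of_notMem (by simp only [Set.mem_Ici, not_le]; exact h),
        Set.indicator_of_mem (Set.mem_Iio.mpr h)]
      ring
  simp_rw [hpt]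
  rw [show (fun _ : ℝ => (1:ℝ)) = (1 : ℝ → ℝ) from rfl,
    integral_indicator_one measurableSet_Iio, measureReal_def, np_Iio, np_Iic_toReal]
  rw [Gmu, if_neg (by linarith [hx.1]), if_neg (by linarith [hx.2])]

/-- Neyman–Pearson for Gaussians: for `μ ≥ 0`, the pair
`(N(0,1), N(μ,1))` satisfies the trade-off bound `G_μ`, and for every `x ∈ (0,1)` the
deterministic threshold test `φ = 𝟙_{[Φ⁻¹(1−x), ∞)}` has type I error exactly `x`
under `N(0,1)` and type II error exactly `G_μ(x)` under `N(μ,1)`. -/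
theorem stmt_14 (μ : ℝ) (hμ : 0 ≤ μ) :
    SatisfiesTradeoff (gaussianReal 0 1) (gaussianReal μ 1) (Gmu μ) ∧
      ∀ x ∈ Set.Ioo (0 : ℝ) 1,
        (∫ ω, (Set.Ici (stdGaussianCDFInv (1 - x))).indicator
            (fun _ => (1 : ℝ)) ω ∂(gaussianReal 0 1)) = x ∧
        (∫ ω, (1 - (Set.Ici (stdGaussianCDFInv (1 - x))).indicator
            (fun _ => (1 : ℝ)) ω) ∂(gaussianReal μ 1)) = Gmu μ x := by
  refine ⟨?_, fun x hx => ⟨np_typeI hx, np_typeII μ hx⟩⟩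
  intro φ hφm hφ01
  have hφint : ∀ ν : ℝ, Integrable φ (gaussianReal ν 1) := by
    intro ν
    refine Integrable.mono' (integrable_const 1) hφm.aestronglyMeasurable
      (ae_of_all _ fun ω => ?_)
    rw [Real.norm_eq_abs, abs_le]
    exact ⟨by linarith [(hφ01 ω).1], (hφ01 ω).2⟩
  set α := ∫ ω, φ ω ∂(gaussianReal 0 1) with hα
  have hα0 : 0 ≤ α := integral_nonneg fun ω => (hφ01 ω).1
  have hα1 : α ≤ 1 := by
    have := integral_mono (hφint 0) (integrable_const 1) (fun ω => (hφ01 ω).2)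
    simpa using this
  have hsub : ∫ ω, (1 - φ ω) ∂(gaussianReal μ 1) = 1 - ∫ ω, φ ω ∂(gaussianReal μ 1) := by
    rw [integral_sub (integrable_const 1) (hφint μ)]
    simp
  by_cases hz : α ≤ 0
  · -- boundary case α = 0
    have hαz : α = 0 := le_antisymm hz hα0
    have h0 : φ =ᵐ[gaussianReal 0 1] 0 :=
      (integral_eq_zero_iff_of_nonneg (fun ω => (hφ01 ω).1) (hφint 0)).mp hαz
    have hac : gaussianReal μ 1 ≪ gaussianReal 0 1 :=
      (gaussianReal_absolutelyContinuous μ one_ne_zero).trans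
        (gaussianReal_absolutelyContinuous' 0 one_ne_zero)
    have h0' : φ =ᵐ[gaussianReal μ 1] 0 := h0.filter_mono hac.ae_le
    have : ∫ ω, φ ω ∂(gaussianReal μ 1) = 0 := by
      rw [integral_congr_ae h0']
      simp
    rw [hsub, this, Gmu, if_pos hz]
    norm_num
  · by_cases ho : 1 ≤ α
    · -- boundary case α = 1
      rw [Gmu, if_neg hz, if_pos ho]
      exact integral_nonneg fun ω => show (0:ℝ) ≤ 1 - φ ω by linarith [(hφ01 ω).2]
    · -- main case : 0 < α < 1
      have hxα : α ∈ Set.Ioo (0:ℝ) 1 := ⟨lt_of_not_ge hz, lt_of_not_ge ho⟩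
      set t := stdGaussianCDFInv (1 - α) with htdef
      set ψ : ℝ → ℝ := (Set.Ici t).indicator (fun _ => (1:ℝ)) with hψdef
      set c := rexp (μ * t - μ^2/2) with hc
      have hψ01 : ∀ ω : ℝ, ψ ω ∈ Set.Icc (0:ℝ) 1 := by
        intro ω
        rw [hψdef]
        rcases le_or_gt t ω with h | h
        · rw [Set.indicator_of_mem (Set.mem_Ici.mpr h)]; exact ⟨zero_le_one, le_refl 1⟩
        · rw [Set.indicator_of_notMem (by simp only [Set.mem_Ici, not_le]; exact h)]
          exact ⟨le_refl 0, zero_le_one⟩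
      have hψm : Measurable ψ := measurable_const.indicator measurableSet_Ici
      -- density identity
      have hpdf : ∀ x : ℝ, gaussianPDFReal μ 1 x
          = gaussianPDFReal 0 1 x * rexp (μ * x - μ^2/2) := by
        intro x
        simp only [gaussianPDFReal, NNReal.coe_one, mul_one, sub_zero]
        rw [mul_assoc, ← Real.exp_add]
        congr 1
        ring
      -- integrability of the four products
      have hbd : ∀ g : ℝ → ℝ, Measurable g → (∀ ω, g ω ∈ Set.Icc (0:ℝ) 1) → ∀ ν : ℝ,
          Integrable (fun x => g x * gaussianPDFReal ν 1 x) := by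
        intro g hg hg01 ν
        refine Integrable.bdd_mul (c := 1) (integrable_gaussianPDFReal ν 1)
          hg.aestronglyMeasurable (ae_of_all _ fun x => ?_)
        rw [Real.norm_eq_abs, abs_le]
        exact ⟨by linarith [(hg01 x).1], (hg01 x).2⟩
      have hi1 : Integrable (fun x => ψ x * gaussianPDFReal μ 1 x) := hbd ψ hψm hψ01 μ
      have hi2 : Integrable (fun x => φ x * gaussianPDFReal μ 1 x) := hbd φ hφm hφ01 μ
      have hi3 : Integrable (fun x => ψ x * gaussianPDFReal 0 1 x) := hbd ψ hψm hψ01 0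
      have hi4 : Integrable (fun x => φ x * gaussianPDFReal 0 1 x) := hbd φ hφm hφ01 0
      -- same type I error
      have hCD : ∫ x, ψ x * gaussianPDFReal 0 1 x = ∫ x, φ x * gaussianPDFReal 0 1 x := by
        rw [← np_integral_eq 0 ψ, ← np_integral_eq 0 φ, ← hα, hψdef]
        exact np_typeI hxα
      -- pointwise nonnegativity
      have hkey : ∀ x : ℝ, 0 ≤ (ψ x - φ x) * (gaussianPDFReal μ 1 x
          - c * gaussianPDFReal 0 1 x) := by
        intro x
        rcases le_or_gt t x with h | h
        · have h1 : ψ x = 1 := by rw [hψdef, Set.indicator_of_mem (Set.mem_Ici.mpr h)]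
          have h2 : c ≤ rexp (μ * x - μ^2/2) := by
            rw [hc]
            apply Real.exp_le_exp.mpr
            have := mul_le_mul_of_nonneg_left h hμ
            linarith
          have h3 : 0 ≤ gaussianPDFReal μ 1 x - c * gaussianPDFReal 0 1 x := by
            rw [hpdf x]
            nlinarith [np_pdf_pos 0 x]
          have h4 : 0 ≤ ψ x - φ x := by rw [h1]; linarith [(hφ01 x).2]
          exact mul_nonneg h4 h3
        · have h1 : ψ x = 0 := by
            rw [hψdef, Set.indicator_of_notMem (by simp only [Set.mem_Ici, not_le]; exact h)]
          have h2 : rexp (μ * x - μ^2/2) ≤ c := by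
            rw [hc]
            apply Real.exp_le_exp.mpr
            have := mul_le_mul_of_nonneg_left h.le hμ
            linarith
          have h3 : gaussianPDFReal μ 1 x - c * gaussianPDFReal 0 1 x ≤ 0 := by
            rw [hpdf x]
            nlinarith [np_pdf_pos 0 x]
          have h4 : ψ x - φ x ≤ 0 := by rw [h1]; linarith [(hφ01 x).1]
          nlinarith [mul_nonneg (neg_nonneg.mpr h4) (neg_nonneg.mpr h3)]
      -- the Neyman–Pearson inequality
      have hF : (fun x => (ψ x - φ x) * (gaussianPDFReal μ 1 x - c * gaussianPDFReal 0 1 x))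
          = fun x => (ψ x * gaussianPDFReal μ 1 x - φ x * gaussianPDFReal μ 1 x)
            - (c * (ψ x * gaussianPDFReal 0 1 x) - c * (φ x * gaussianPDFReal 0 1 x)) := by
        funext x
        ring
      have h0le : 0 ≤ ∫ x, (ψ x - φ x) * (gaussianPDFReal μ 1 x
          - c * gaussianPDFReal 0 1 x) := integral_nonneg hkey
      rw [hF] at h0le
      have hiA : Integrable (fun x => ψ x * gaussianPDFReal μ 1 x
          - φ x * gaussianPDFReal μ 1 x) := hi1.sub hi2
      have hiB : Integrable (fun x => c * (ψ x * gaussianPDFReal 0 1 x)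
          - c * (φ x * gaussianPDFReal 0 1 x)) := (hi3.const_mul c).sub (hi4.const_mul c)
      rw [integral_sub hiA hiB, integral_sub hi1 hi2,
        integral_sub (hi3.const_mul c) (hi4.const_mul c),
        integral_const_mul, integral_const_mul, hCD, sub_self, sub_zero] at h0le
      have hBA : ∫ ω, φ ω ∂(gaussianReal μ 1) ≤ ∫ ω, ψ ω ∂(gaussianReal μ 1) := by
        rw [np_integral_eq μ φ, np_integral_eq μ ψ]
        linarith
      have hψsub : ∫ ω, (1 - ψ ω) ∂(gaussianReal μ 1)
          = 1 - ∫ ω, ψ ω ∂(gaussianReal μ 1) := by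
        have hψint : Integrable ψ (gaussianReal μ 1) := by
          refine Integrable.mono' (integrable_const 1) hψm.aestronglyMeasurable
            (ae_of_all _ fun ω => ?_)
          rw [Real.norm_eq_abs, abs_le]
          exact ⟨by linarith [(hψ01 ω).1], (hψ01 ω).2⟩
        rw [integral_sub (integrable_const 1) hψint]
        simp
      have hG : Gmu μ α = 1 - ∫ ω, ψ ω ∂(gaussianReal μ 1) := by
        rw [← hψsub, hψdef]
        exact (np_typeII μ hxα).symm
      rw [hsub, hG]
      linarith
end
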